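/- Let x: [0,T] → ℝ² \ {0} be an H¹ loop (x(0) = x(T)) with nonzero winding number around the origin. Writing x(t) = ρ(t)e^{iθ(t)} in polar coordinates, one has ∫₀ᵀ |ẋ(t)|² dt ≥ (1/T)(x_M − x_m)² + (x_m²/T)(∫₀ᵀ |θ̇(t)| dt)², where x_M = max_{[0,T]} |x(t)| and x_m = min_{[0,T]} |x(t)|. -/

import Mathlib

open MeasureTheory Set intervalIntegral Metric Filter

section Auxiliary

lemma diag_null (μ : Measure ℝ) (hμ : μ ≤ volume) [SFinite μ] :
    (μ.prod μ) {p : ℝ × ℝ | p.1 = p.2} = 0 := by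
  have hmeas : MeasurableSet {p : ℝ × ℝ | p.1 = p.2} :=
    (isClosed_eq continuous_fst continuous_snd).measurableSet
  rw [Measure.prod_apply hmeas]
  have : ∀ x : ℝ, μ (Prod.mk x ⁻¹' {p : ℝ × ℝ | p.1 = p.2}) = 0 := by
    intro x
    have : Prod.mk x ⁻¹' {p : ℝ × ℝ | p.1 = p.2} = {x} := by
      ext y; simp [eq_comm]
    rw [this]
    exact le_antisymm ((hμ _).trans_eq (Real.volume_singleton)) (zero_le)
  rw [lintegral_congr this, lintegral_zero]

lemma fubini_symm {𝕜 : Type*} [RCLike 𝕜] (a b : ℝ) (F G : ℝ → 𝕜)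
    (hF : IntegrableOn F (Ioc a b)) (hG : IntegrableOn G (Ioc a b)) :
    (∫ s in Ioc a b, G s * ∫ u in Ioc a s, F u)
      + (∫ s in Ioc a b, F s * ∫ u in Ioc a s, G u)
      = (∫ s in Ioc a b, F s) * (∫ s in Ioc a b, G s) := by
  set μ := volume.restrict (Ioc a b) with hμdef
  have hle : μ ≤ volume := Measure.restrict_le_self
  have hsetm : MeasurableSet {p : ℝ × ℝ | p.2 ≤ p.1} :=
    (isClosed_le continuous_snd continuous_fst).measurableSet
  have hsetm' : MeasurableSet {p : ℝ × ℝ | p.1 ≤ p.2} :=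
    (isClosed_le continuous_fst continuous_snd).measurableSet
  -- the two kernels
  set H : ℝ × ℝ → 𝕜 := {p : ℝ × ℝ | p.2 ≤ p.1}.indicator (fun p => F p.2 * G p.1) with hHdef
  set K : ℝ × ℝ → 𝕜 := {p : ℝ × ℝ | p.1 ≤ p.2}.indicator (fun p => F p.2 * G p.1) with hKdef
  have hprod : Integrable (fun p : ℝ × ℝ => F p.2 * G p.1) (μ.prod μ) := by
    have := hG.mul_prod hF  -- fun z => G z.1 * F z.2
    simpa [mul_comm] using this
  have hH : Integrable H (μ.prod μ) := hprod.indicator hsetm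
  have hK : Integrable K (μ.prod μ) := hprod.indicator hsetm'
  -- first identity : ∫ H = first LHS term
  have key : ∀ (F G : ℝ → 𝕜), IntegrableOn F (Ioc a b) → IntegrableOn G (Ioc a b) →
      ∫ p, {p : ℝ × ℝ | p.2 ≤ p.1}.indicator (fun p => F p.2 * G p.1) p ∂(μ.prod μ)
        = ∫ s in Ioc a b, G s * ∫ u in Ioc a s, F u := by
    intro F G hF hG
    have hprod : Integrable (fun p : ℝ × ℝ => F p.2 * G p.1) (μ.prod μ) := by
      have := hG.mul_prod hF
      simpa [mul_comm] using this
    rw [MeasureTheory.integral_prod _ (hprod.indicator hsetm)]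
    apply setIntegral_congr_fun measurableSet_Ioc
    intro s hs
    have : ∀ u : ℝ, ({p : ℝ × ℝ | p.2 ≤ p.1}.indicator (fun p => F p.2 * G p.1) (s, u))
        = (Iic s).indicator (fun u => F u * G s) u := by
      intro u
      by_cases h : u ≤ s <;> simp [Set.indicator_apply, h]
    simp_rw [this]
    rw [MeasureTheory.integral_indicator measurableSet_Iic, hμdef,
      Measure.restrict_restrict measurableSet_Iic]
    have hinter : Iic s ∩ Ioc a b = Ioc a s := by
      ext u; simp only [mem_inter_iff, mem_Iic, mem_Ioc, mem_setOf_eq]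
      constructor
      · rintro ⟨h1, h2, h3⟩; exact ⟨h2, h1⟩
      · rintro ⟨h1, h2⟩; exact ⟨h2, h1, h2.trans hs.2⟩
    rw [hinter, MeasureTheory.integral_mul_const]
    ring
  have h1 : ∫ p, H p ∂(μ.prod μ) = ∫ s in Ioc a b, G s * ∫ u in Ioc a s, F u := key F G hF hG
  -- second term via swap
  have h2 : ∫ p, K p ∂(μ.prod μ) = ∫ s in Ioc a b, F s * ∫ u in Ioc a s, G u := by
    have hswap : ∀ p : ℝ × ℝ,
        K p = ({p : ℝ × ℝ | p.2 ≤ p.1}.indicator (fun p => G p.2 * F p.1)) p.swap := by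
      intro p
      by_cases h : p.1 ≤ p.2 <;> simp [hKdef, Set.indicator_apply, h, Prod.swap, mul_comm]
    calc ∫ p, K p ∂(μ.prod μ)
        = ∫ p : ℝ × ℝ, ({p : ℝ × ℝ | p.2 ≤ p.1}.indicator (fun p => G p.2 * F p.1)) p.swap
            ∂(μ.prod μ) := by simp_rw [hswap]
      _ = ∫ p, ({p : ℝ × ℝ | p.2 ≤ p.1}.indicator (fun p => G p.2 * F p.1)) p ∂(μ.prod μ) :=
            MeasureTheory.integral_prod_swap _
      _ = ∫ s in Ioc a b, F s * ∫ u in Ioc a s, G u := key G F hG hF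
  -- sum
  have hae : H + K =ᵐ[μ.prod μ] fun p => F p.2 * G p.1 := by
    have hdiag := diag_null μ hle
    have : {p : ℝ × ℝ | ¬ ((H + K) p = F p.2 * G p.1)} ⊆ {p : ℝ × ℝ | p.1 = p.2} := by
      intro p hp
      by_contra hne
      apply hp
      rcases lt_or_gt_of_ne (hne : ¬ p.1 = p.2) with h | h
      · simp [hHdef, hKdef, Set.indicator_apply, not_le.mpr h, le_of_lt h]
      · simp [hHdef, hKdef, Set.indicator_apply, not_le.mpr h, le_of_lt h]
    exact measure_mono_null this hdiag
  have hsum : ∫ p, H p ∂(μ.prod μ) + ∫ p, K p ∂(μ.prod μ)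
      = ∫ p : ℝ × ℝ, F p.2 * G p.1 ∂(μ.prod μ) := by
    rw [← MeasureTheory.integral_add hH hK]
    exact MeasureTheory.integral_congr_ae hae
  have hrhs : ∫ p : ℝ × ℝ, F p.2 * G p.1 ∂(μ.prod μ)
      = (∫ s in Ioc a b, F s) * (∫ s in Ioc a b, G s) := by
    have := MeasureTheory.integral_prod_mul (μ := μ) (ν := μ) G F
    calc ∫ p : ℝ × ℝ, F p.2 * G p.1 ∂(μ.prod μ)
        = ∫ p : ℝ × ℝ, G p.1 * F p.2 ∂(μ.prod μ) := by simp_rw [mul_comm]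
      _ = (∫ s, G s ∂μ) * (∫ s, F s ∂μ) := this
      _ = _ := by rw [mul_comm]
  rw [← h1, ← h2, hsum, hrhs]

lemma primitive_mul {𝕜 : Type*} [RCLike 𝕜] {T : ℝ} {f f' g g' : ℝ → 𝕜}
    (hf : Continuous f) (hg : Continuous g)
    (hf' : IntervalIntegrable f' volume 0 T) (hg' : IntervalIntegrable g' volume 0 T)
    (hfr : ∀ t ∈ Icc (0:ℝ) T, f t = f 0 + ∫ s in (0:ℝ)..t, f' s)
    (hgr : ∀ t ∈ Icc (0:ℝ) T, g t = g 0 + ∫ s in (0:ℝ)..t, g' s) :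
    ∀ t ∈ Icc (0:ℝ) T, f t * g t = f 0 * g 0 +
      ∫ s in (0:ℝ)..t, (f s * g' s + f' s * g s) := by
  intro t ht
  obtain ⟨ht0, htT⟩ := ht
  have hT0 : (0:ℝ) ≤ T := le_trans ht0 htT
  have hsub : uIcc (0:ℝ) t ⊆ uIcc 0 T := by
    rw [uIcc_of_le ht0, uIcc_of_le hT0]; exact Icc_subset_Icc le_rfl htT
  have hf't : IntervalIntegrable f' volume 0 t := hf'.mono_set hsub
  have hg't : IntervalIntegrable g' volume 0 t := hg'.mono_set hsub
  have hF : IntegrableOn f' (Ioc 0 t) volume := by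
    simpa [intervalIntegrable_iff_integrableOn_Ioc_of_le ht0] using hf't
  have hG : IntegrableOn g' (Ioc 0 t) volume := by
    simpa [intervalIntegrable_iff_integrableOn_Ioc_of_le ht0] using hg't
  have huIcc : uIcc (0:ℝ) t = Icc 0 t := uIcc_of_le ht0
  -- generic piece
  have e1 : ∀ (p p' q : ℝ → 𝕜), Continuous p → IntegrableOn p' (Ioc 0 t) volume →
      IntegrableOn q (Ioc 0 t) volume →
      (∀ s ∈ Icc (0:ℝ) T, p s = p 0 + ∫ u in (0:ℝ)..s, p' u) →
      ∫ s in Ioc (0:ℝ) t, p s * q s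
        = p 0 * (∫ s in Ioc (0:ℝ) t, q s)
          + ∫ s in Ioc (0:ℝ) t, (q s * ∫ u in Ioc 0 s, p' u) := by
    intro p p' q hp hP hQ hpr
    have h1 : ∀ s ∈ Ioc (0:ℝ) t, p s * q s
        = p 0 * q s + q s * ∫ u in Ioc 0 s, p' u := by
      intro s hs
      have hsIcc : s ∈ Icc (0:ℝ) T := ⟨hs.1.le, hs.2.trans htT⟩
      rw [hpr s hsIcc, integral_of_le hs.1.le]
      ring
    rw [setIntegral_congr_fun measurableSet_Ioc h1, MeasureTheory.integral_add]
    · rw [MeasureTheory.integral_const_mul]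
    · exact hQ.const_mul _
    · have : IntervalIntegrable (fun s => q s * ∫ u in Ioc (0:ℝ) s, p' u) volume 0 t := by
        apply IntervalIntegrable.mul_continuousOn _ ?_
        · rwa [intervalIntegrable_iff_integrableOn_Ioc_of_le ht0]
        · rw [huIcc]
          exact intervalIntegral.continuousOn_primitive
            ((integrableOn_Icc_iff_integrableOn_Ioc).mpr hP)
      rwa [intervalIntegrable_iff_integrableOn_Ioc_of_le ht0] at this
  have e1' := e1 f f' g' hf hF hG hfr
  have e2' := e1 g g' f' hg hG hF hgr
  have hfgi : ∫ s in Ioc (0:ℝ) t, (f s * g' s + f' s * g s)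
      = (∫ s in Ioc (0:ℝ) t, f s * g' s) + ∫ s in Ioc (0:ℝ) t, f' s * g s := by
    apply MeasureTheory.integral_add
    · have := hg't.continuousOn_mul hf.continuousOn
      rwa [intervalIntegrable_iff_integrableOn_Ioc_of_le ht0] at this
    · have := hf't.mul_continuousOn hg.continuousOn
      rwa [intervalIntegrable_iff_integrableOn_Ioc_of_le ht0] at this
  have hfub := fubini_symm 0 t f' g' hF hG
  have hft : f t = f 0 + ∫ s in Ioc (0:ℝ) t, f' s := by
    rw [hfr t ⟨ht0, htT⟩, integral_of_le ht0]
  have hgt : g t = g 0 + ∫ s in Ioc (0:ℝ) t, g' s := by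
    rw [hgr t ⟨ht0, htT⟩, integral_of_le ht0]
  rw [integral_of_le ht0, hfgi, e1', hft, hgt]
  have e2'' : ∫ s in Ioc (0:ℝ) t, f' s * g s
      = g 0 * (∫ s in Ioc (0:ℝ) t, f' s)
        + ∫ s in Ioc (0:ℝ) t, (f' s * ∫ u in Ioc 0 s, g' u) := by
    rw [show (fun s => f' s * g s) = (fun s => g s * f' s) by funext s; ring] at *
    rw [e2']
  rw [e2'']
  set IF := ∫ s in Ioc (0:ℝ) t, f' s
  set IG := ∫ s in Ioc (0:ℝ) t, g' s
  set A := ∫ s in Ioc (0:ℝ) t, (g' s * ∫ u in Ioc 0 s, f' u)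
  set B := ∫ s in Ioc (0:ℝ) t, (f' s * ∫ u in Ioc 0 s, g' u)
  linear_combination -hfub

lemma ae_hasDerivAt_primitive {E : Type*} [NormedAddCommGroup E] [NormedSpace ℝ E]
    [CompleteSpace E] {f : ℝ → E} (hf : Integrable f volume) :
    ∀ᵐ t : ℝ, HasDerivAt (fun u => ∫ s in (0:ℝ)..u, f s) (f t) t := by
  have hloc : LocallyIntegrable f volume := hf.locallyIntegrable
  filter_upwards [IsUnifLocDoublingMeasure.ae_tendsto_average_norm_sub volume hloc 1] with t ht
  rw [hasDerivAt_iff_tendsto_slope]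
  set F : ℝ → E := fun u => ∫ s in (0:ℝ)..u, f s with hFdef
  have hδ : Tendsto (fun u : ℝ => dist u t / 2) (nhdsWithin t {t}ᶜ) (nhdsWithin 0 (Ioi 0)) := by
    apply tendsto_nhdsWithin_iff.mpr
    refine ⟨?_, ?_⟩
    · have h1 : Tendsto (fun u : ℝ => dist u t) (nhds t) (nhds 0) :=
        tendsto_iff_dist_tendsto_zero.mp tendsto_id
      have := h1.div_const 2
      rw [zero_div] at this
      exact this.mono_left nhdsWithin_le_nhds
    · filter_upwards [self_mem_nhdsWithin] with u (hu : u ≠ t)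
      have hpos : 0 < dist u t := dist_pos.mpr hu
      exact mem_Ioi.mpr (by positivity)
  have hmem : ∀ᶠ u in nhdsWithin t {t}ᶜ, t ∈ closedBall ((t + u)/2) (1 * (dist u t / 2)) := by
    apply Eventually.of_forall
    intro u
    rw [mem_closedBall, one_mul, Real.dist_eq, Real.dist_eq]
    have h1 : t - (t + u)/2 = (u - t) / -2 := by ring
    rw [h1, abs_div, abs_sub_comm u t]
    norm_num
  have havg := ht (fun u : ℝ => (t + u)/2) (fun u => dist u t / 2) hδ hmem
  rw [tendsto_iff_norm_sub_tendsto_zero]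
  apply squeeze_zero' (Eventually.of_forall fun u => norm_nonneg _) _ havg
  filter_upwards [self_mem_nhdsWithin] with u (hu : u ≠ t)
  have hdpos : 0 < dist u t := dist_pos.mpr hu
  set B := closedBall ((t + u)/2) (dist u t / 2) with hBdef
  have hsub : uIoc t u ⊆ B := by
    intro y hy
    rw [hBdef, mem_closedBall, Real.dist_eq]
    rcases le_total t u with h | h
    · rw [uIoc_of_le h] at hy
      rw [Real.dist_eq, abs_of_nonneg (by linarith : (0:ℝ) ≤ u - t)]
      rw [abs_le]; exact ⟨by cases hy; linarith, by cases hy; linarith⟩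
    · rw [uIoc_of_ge h] at hy
      rw [Real.dist_eq, abs_of_nonpos (by linarith : u - t ≤ 0)]
      rw [abs_le]; exact ⟨by cases hy; linarith, by cases hy; linarith⟩
  have hFint : ∀ a b : ℝ, IntervalIntegrable f volume a b := fun a b => hf.intervalIntegrable
  have hslope : slope F t u - f t = (u - t)⁻¹ • (∫ s in t..u, (f s - f t)) := by
    rw [slope_def_module]
    have h2 : F u - F t = ∫ s in t..u, f s := by
      rw [hFdef]
      exact intervalIntegral.integral_interval_sub_left (hFint 0 u) (hFint 0 t)
    rw [h2, intervalIntegral.integral_sub (hFint t u) (intervalIntegrable_const),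
      intervalIntegral.integral_const, smul_sub, smul_smul,
      inv_mul_cancel₀ (sub_ne_zero.mpr hu), one_smul]
  rw [hslope, norm_smul, norm_inv, Real.norm_eq_abs, ← Real.dist_eq]
  have hIoc : ‖∫ s in t..u, (f s - f t)‖ ≤ ∫ y in uIoc t u, ‖f y - f t‖ :=
    intervalIntegral.norm_integral_le_integral_norm_uIoc
  have hint : IntegrableOn (fun y => ‖f y - f t‖) B volume := by
    apply Integrable.norm
    exact hf.integrableOn.sub (integrableOn_const measure_closedBall_lt_top.ne)
  have hmono : ∫ y in uIoc t u, ‖f y - f t‖ ≤ ∫ y in B, ‖f y - f t‖ := by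
    apply setIntegral_mono_set hint
    · exact Eventually.of_forall fun y => norm_nonneg _
    · exact HasSubset.Subset.eventuallyLE hsub
  have hBvol : (volume B).toReal = dist u t := by
    rw [hBdef, Real.volume_closedBall]
    rw [ENNReal.toReal_ofReal (by positivity)]
    ring
  have havg_eq : ∫ y in B, ‖f y - f t‖ = dist u t * ⨍ y in B, ‖f y - f t‖ := by
    rw [setAverage_eq, measureReal_def, ← hBvol, smul_eq_mul, ← mul_assoc,
      mul_inv_cancel₀ (by rw [hBvol]; exact hdpos.ne'), one_mul]
  calc (dist u t)⁻¹ * ‖∫ s in t..u, (f s - f t)‖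
      ≤ (dist u t)⁻¹ * (dist u t * ⨍ y in B, ‖f y - f t‖) := by
        apply mul_le_mul_of_nonneg_left _ (by positivity)
        rw [← havg_eq]; exact hIoc.trans hmono
    _ = ⨍ y in B, ‖f y - f t‖ := by
        rw [← mul_assoc, inv_mul_cancel₀ hdpos.ne', one_mul]

lemma ae_hasDerivWithinAt_of_rep {E : Type*} [NormedAddCommGroup E] [NormedSpace ℝ E]
    [CompleteSpace E] {T : ℝ} (hT : 0 ≤ T) {f f' : ℝ → E}
    (hf' : IntervalIntegrable f' volume 0 T)
    (hfr : ∀ t ∈ Icc (0:ℝ) T, f t = f 0 + ∫ s in (0:ℝ)..t, f' s) :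
    ∀ᵐ t : ℝ, t ∈ Ioo (0:ℝ) T → HasDerivWithinAt f (f' t) (Icc 0 T) t := by
  set g : ℝ → E := (Ioo (0:ℝ) T).indicator f' with hgdef
  have hInt : Integrable g volume := by
    rw [hgdef, integrable_indicator_iff measurableSet_Ioo]
    exact ((intervalIntegrable_iff_integrableOn_Ioc_of_le hT).mp hf').mono_set
      Ioo_subset_Ioc_self
  have hTa : ∀ᵐ s : ℝ, s ≠ T := by
    rw [ae_iff]
    have : {s : ℝ | ¬ s ≠ T} = {T} := by ext s; simp
    rw [this]; exact Real.volume_singleton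
  -- primitives agree
  have hagree : ∀ u ∈ Icc (0:ℝ) T, (∫ s in (0:ℝ)..u, g s) = ∫ s in (0:ℝ)..u, f' s := by
    intro u hu
    rw [integral_of_le hu.1, integral_of_le hu.1]
    apply setIntegral_congr_ae measurableSet_Ioc
    filter_upwards [hTa] with s hs hsu
    rw [hgdef]
    apply Set.indicator_of_mem
    exact ⟨hsu.1, lt_of_le_of_ne (hsu.2.trans hu.2) hs⟩
  filter_upwards [ae_hasDerivAt_primitive hInt] with t hder ht
  have hgt : g t = f' t := Set.indicator_of_mem ht _
  have hG : HasDerivAt (fun u => f 0 + ∫ s in (0:ℝ)..u, g s) (f' t) t := by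
    rw [← hgt]
    exact (hder).const_add (f 0)
  apply (hG.hasDerivWithinAt (s := Icc 0 T)).congr
  · intro y hy
    rw [hfr y hy, hagree y hy]
  · rw [hfr t (Ioo_subset_Icc_self ht), hagree t (Ioo_subset_Icc_self ht)]

lemma intervalIntegrable_ofReal {T : ℝ} {f : ℝ → ℝ} (hf : IntervalIntegrable f volume 0 T) :
    IntervalIntegrable (fun s => (f s : ℂ)) volume 0 T := by
  rw [intervalIntegrable_iff] at hf ⊢
  exact hf.ofReal

lemma exp_rep {T : ℝ} (hT : 0 ≤ T) {θ θ' : ℝ → ℝ}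
    (hθc : Continuous θ) (hθ' : IntervalIntegrable θ' volume 0 T)
    (hθr : ∀ t ∈ Icc (0:ℝ) T, θ t = θ 0 + ∫ s in (0:ℝ)..t, θ' s) :
    ∀ t ∈ Icc (0:ℝ) T, Complex.exp (θ t * Complex.I)
      = Complex.exp (θ 0 * Complex.I)
        + ∫ s in (0:ℝ)..t, ((θ' s : ℂ) * Complex.I * Complex.exp (θ s * Complex.I)) := by
  set Θ : ℝ → ℝ := fun s => θ s - θ 0 with hΘdef
  set Θc : ℝ → ℂ := fun s => ((Θ s : ℝ) : ℂ) with hΘcdef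
  set θ'c : ℝ → ℂ := fun s => ((θ' s : ℝ) : ℂ) with hθ'cdef
  have hΘ0 : Θc 0 = 0 := by simp [hΘcdef, hΘdef]
  have hΘcont : Continuous Θc := Complex.continuous_ofReal.comp (hθc.sub continuous_const)
  have hθ'c : IntervalIntegrable θ'c volume 0 T := intervalIntegrable_ofReal hθ'
  have hΘrep : ∀ s ∈ Icc (0:ℝ) T, Θc s = Θc 0 + ∫ u in (0:ℝ)..s, θ'c u := by
    intro s hs
    rw [hΘ0, zero_add, hΘcdef]
    simp only [hΘdef]
    rw [hθr s hs]
    push_cast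
    rw [intervalIntegral.integral_ofReal]
    push_cast
    ring
  -- powers
  have hPow : ∀ n : ℕ, ∀ s ∈ Icc (0:ℝ) T,
      Θc s ^ (n+1) = ∫ u in (0:ℝ)..s, (((n:ℂ)+1) * Θc u ^ n * θ'c u) := by
    intro n
    induction n with
    | zero =>
      intro s hs
      simp only [pow_one, Nat.cast_zero, zero_add, pow_zero, mul_one, one_mul]
      rw [hΘrep s hs, hΘ0, zero_add]
    | succ n ih =>
      intro s hs
      have hcont : Continuous (fun u => Θc u ^ (n+1)) := hΘcont.pow _
      have hf' : IntervalIntegrable (fun u => ((n:ℂ)+1) * Θc u ^ n * θ'c u) volume 0 T := by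
        have := hθ'c.continuousOn_mul
          (((continuous_const.mul (hΘcont.pow n)) : Continuous fun u => ((n:ℂ)+1) * Θc u ^ n)
            |>.continuousOn)
        simpa [mul_assoc] using this
      have hfr : ∀ u ∈ Icc (0:ℝ) T, Θc u ^ (n+1)
          = (fun w => Θc w ^ (n+1)) 0 + ∫ v in (0:ℝ)..u, (((n:ℂ)+1) * Θc v ^ n * θ'c v) := by
        intro u hu
        rw [ih u hu]
        simp [hΘ0]
      have := primitive_mul (T := T) hcont hΘcont hf' hθ'c hfr hΘrep s hs
      simp only [hΘ0, mul_zero, zero_mul, zero_add, pow_succ] at this ⊢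
      rw [this]
      apply intervalIntegral.integral_congr
      intro u _
      push_cast
      ring
  -- bound for Θ
  obtain ⟨C, hC⟩ : ∃ C : ℝ, ∀ s ∈ Icc (0:ℝ) T, ‖Θc s‖ ≤ C :=
    (isCompact_Icc).exists_bound_of_continuousOn hΘcont.continuousOn
  have hC0 : 0 ≤ C := le_trans (norm_nonneg _) (hC 0 ⟨le_rfl, hT⟩)
  -- main computation at t
  intro t ht
  have ht0 := ht.1
  set g : ℕ → ℝ → ℂ :=
    fun n u => (θ'c u * Complex.I) * ((Θc u * Complex.I) ^ n / n.factorial) with hgdef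
  have hθ'Ioc : IntegrableOn θ'c (Ioc 0 t) volume := by
    rw [← intervalIntegrable_iff_integrableOn_Ioc_of_le ht0]
    apply hθ'c.mono_set
    rw [uIcc_of_le ht0, uIcc_of_le hT]
    exact Icc_subset_Icc le_rfl ht.2

  have hgInt : ∀ n, Integrable (g n) (volume.restrict (Ioc 0 t)) := by
    intro n
    have hθ'ct : IntervalIntegrable θ'c volume 0 t := by
      apply hθ'c.mono_set
      rw [uIcc_of_le ht0, uIcc_of_le hT]
      exact Icc_subset_Icc le_rfl ht.2
    have hcont : Continuous (fun u => Complex.I * ((Θc u * Complex.I) ^ n / n.factorial)) :=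
      continuous_const.mul (((hΘcont.mul continuous_const).pow n).div_const _)
    have h2 := hθ'ct.mul_continuousOn hcont.continuousOn
    rw [intervalIntegrable_iff_integrableOn_Ioc_of_le ht0] at h2
    have : g n = fun u => θ'c u * (Complex.I * ((Θc u * Complex.I) ^ n / n.factorial)) := by
      funext u; rw [hgdef]; ring
    rw [this]
    exact h2
  set M : ℝ := ∫ u in Ioc 0 t, ‖θ'c u‖ with hMdef
  have hM0 : 0 ≤ M := setIntegral_nonneg measurableSet_Ioc fun u _ => norm_nonneg _
  have hbound : ∀ n, (∫ u in Ioc 0 t, ‖g n u‖) ≤ C ^ n / n.factorial * M := by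
    intro n
    rw [hMdef, ← MeasureTheory.integral_const_mul]
    apply setIntegral_mono_on (hgInt n).norm (hθ'Ioc.norm.const_mul _) measurableSet_Ioc
    intro u hu
    have huIcc : u ∈ Icc (0:ℝ) T := ⟨hu.1.le, hu.2.trans ht.2⟩
    rw [hgdef]
    simp only [norm_mul, norm_div, norm_pow, Complex.norm_I, mul_one, Complex.norm_natCast]
    have h1 : ‖Θc u‖ ^ n ≤ C ^ n := pow_le_pow_left₀ (norm_nonneg _) (hC u huIcc) n
    have h2 : (0:ℝ) < n.factorial := by exact_mod_cast n.factorial_pos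
    calc ‖θ'c u‖ * (‖Θc u‖ ^ n / ↑n.factorial) ≤ ‖θ'c u‖ * (C ^ n / ↑n.factorial) := by
          gcongr
      _ = C ^ n / ↑n.factorial * ‖θ'c u‖ := by ring
  have hSummable : Summable fun n => ∫ u in Ioc 0 t, ‖g n u‖ := by
    apply Summable.of_nonneg_of_le
      (fun n => setIntegral_nonneg measurableSet_Ioc fun u _ => norm_nonneg _) hbound
    exact (Real.summable_pow_div_factorial C).mul_right M
  have hHasSum := MeasureTheory.hasSum_integral_of_summable_integral_norm hgInt hSummable
  -- identify the tsum
  have htsum : ∀ u : ℝ, (∑' n, g n u) = θ'c u * Complex.I * Complex.exp (Θc u * Complex.I) := by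
    intro u
    rw [hgdef]
    rw [tsum_mul_left]
    congr 1
    rw [Complex.exp_eq_exp_ℂ]
    exact (NormedSpace.expSeries_div_hasSum_exp (Θc u * Complex.I)).tsum_eq
  -- identify each integral
  have hval : ∀ n : ℕ, (∫ u in Ioc 0 t, g n u)
      = (Θc t * Complex.I) ^ (n+1) / ((n+1).factorial) := by
    intro n
    have hfacn : ((n.factorial : ℂ)) ≠ 0 := Nat.cast_ne_zero.mpr n.factorial_ne_zero
    have hn1 : ((n:ℂ) + 1) ≠ 0 := by
      have := Nat.cast_add_one_ne_zero (R := ℂ) n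
      exact_mod_cast this
    have h1 : ∫ u in Ioc 0 t, (Θc u ^ n * θ'c u) = Θc t ^ (n+1) / ((n:ℂ)+1) := by
      have hp := hPow n t ht
      rw [integral_of_le ht0] at hp
      have h2 : ∫ u in Ioc 0 t, (((n:ℂ)+1) * Θc u ^ n * θ'c u)
          = ((n:ℂ)+1) * ∫ u in Ioc 0 t, (Θc u ^ n * θ'c u) := by
        rw [← MeasureTheory.integral_const_mul]
        apply setIntegral_congr_fun measurableSet_Ioc
        intro u _; dsimp only; ring
      rw [h2] at hp
      field_simp [hn1]
      linear_combination -hp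
    have h3 : ∫ u in Ioc 0 t, g n u
        = Complex.I ^ (n+1) / n.factorial * ∫ u in Ioc 0 t, (Θc u ^ n * θ'c u) := by
      rw [← MeasureTheory.integral_const_mul]
      apply setIntegral_congr_fun measurableSet_Ioc
      intro u _
      rw [hgdef]
      dsimp only
      rw [mul_pow]
      ring
    rw [h3, h1, mul_pow]
    have hfs : (((n+1).factorial : ℂ)) = (n.factorial : ℂ) * ((n:ℂ)+1) := by
      rw [Nat.factorial_succ]
      push_cast
      ring
    rw [hfs]
    field_simp
  have hExpSum : HasSum (fun n : ℕ => (Θc t * Complex.I) ^ (n+1) / ((n+1).factorial))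
      (Complex.exp (Θc t * Complex.I) - 1) := by
    have h := NormedSpace.expSeries_div_hasSum_exp (Θc t * Complex.I)
    rw [← Complex.exp_eq_exp_ℂ] at h
    have h2 := (hasSum_nat_add_iff' (f := fun n : ℕ => (Θc t * Complex.I) ^ n / n.factorial)
      (g := Complex.exp (Θc t * Complex.I)) 1).mpr h
    simpa using h2
  have hkey : (∫ u in Ioc 0 t, θ'c u * Complex.I * Complex.exp (Θc u * Complex.I))
      = Complex.exp (Θc t * Complex.I) - 1 := by
    have h1 : HasSum (fun n => ∫ u in Ioc 0 t, g n u)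
        (∫ u in Ioc 0 t, θ'c u * Complex.I * Complex.exp (Θc u * Complex.I)) := by
      have := hHasSum
      rwa [show (∫ u in Ioc 0 t, ∑' n, g n u)
        = ∫ u in Ioc 0 t, θ'c u * Complex.I * Complex.exp (Θc u * Complex.I) from
        setIntegral_congr_fun measurableSet_Ioc fun u _ => htsum u] at this
    have h2 : HasSum (fun n => ∫ u in Ioc 0 t, g n u)
        (Complex.exp (Θc t * Complex.I) - 1) := by
      have : (fun n => ∫ u in Ioc 0 t, g n u)
          = fun n : ℕ => (Θc t * Complex.I) ^ (n+1) / ((n+1).factorial) := funext hval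
      rw [this]
      exact hExpSum
    exact h1.unique h2
  -- final assembly
  have hsplit : ∀ s : ℝ, Complex.exp ((θ s : ℂ) * Complex.I)
      = Complex.exp ((θ 0 : ℂ) * Complex.I) * Complex.exp (Θc s * Complex.I) := by
    intro s
    rw [← Complex.exp_add]
    congr 1
    rw [hΘcdef]
    simp only [hΘdef]
    push_cast
    ring
  rw [hsplit t, integral_of_le ht0]
  have : ∫ s in Ioc 0 t, ((θ' s : ℂ) * Complex.I * Complex.exp ((θ s :ℂ) * Complex.I))
      = Complex.exp ((θ 0 : ℂ) * Complex.I)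
        * ∫ s in Ioc 0 t, (θ'c s * Complex.I * Complex.exp (Θc s * Complex.I)) := by
    rw [← MeasureTheory.integral_const_mul]
    apply setIntegral_congr_fun measurableSet_Ioc
    intro s _
    dsimp only
    rw [hsplit s]
    simp only [hθ'cdef]
    ring
  rw [this, hkey]
  ring

lemma cs_helper {T : ℝ} (hT : 0 < T) {f : ℝ → ℝ}
    (hf : IntervalIntegrable f volume 0 T)
    (hf2 : IntervalIntegrable (fun s => f s ^ 2) volume 0 T) :
    (∫ s in (0:ℝ)..T, |f s|) ^ 2 ≤ T * ∫ s in (0:ℝ)..T, f s ^ 2 := by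
  set c : ℝ := (∫ s in (0:ℝ)..T, |f s|) / T with hcdef
  have habs : IntervalIntegrable (fun s => |f s|) volume 0 T := hf.abs
  have h0 : 0 ≤ ∫ s in (0:ℝ)..T, (|f s| - c)^2 :=
    intervalIntegral.integral_nonneg hT.le fun u _ => sq_nonneg _
  have hexp : ∫ s in (0:ℝ)..T, (|f s| - c)^2
      = (∫ s in (0:ℝ)..T, f s ^2) - 2*c*(∫ s in (0:ℝ)..T, |f s|) + T * c^2 := by
    have h1 : (fun s => (|f s| - c)^2) = fun s => (f s^2 - (2*c)*|f s|) + c^2 := by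
      funext s
      rw [sub_sq, sq_abs]
      ring
    rw [h1, intervalIntegral.integral_add (hf2.sub (habs.const_mul (2*c)))
        intervalIntegrable_const,
      intervalIntegral.integral_sub hf2 (habs.const_mul (2*c)),
      intervalIntegral.integral_const_mul, intervalIntegral.integral_const]
    simp only [sub_zero, smul_eq_mul]
  have hc : c * T = ∫ s in (0:ℝ)..T, |f s| := div_mul_cancel₀ _ hT.ne'
  have h3 : 2*c*(∫ s in (0:ℝ)..T, |f s|) = 2*(c^2*T) := by rw [← hc]; ring
  have h2 : c^2*T ≤ ∫ s in (0:ℝ)..T, f s ^2 := by linarith [h0, hexp]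
  have h4 : (∫ s in (0:ℝ)..T, |f s|)^2 = (c^2*T)*T := by rw [← hc]; ring
  rw [h4, mul_comm T (∫ s in (0:ℝ)..T, f s ^ 2)]
  exact mul_le_mul_of_nonneg_right h2 hT.le

end Auxiliary

/-- `x : [0,T] → ℝ²` (modeled as `ℂ`) is `H¹` with (weak) derivative `x'`. -/
def IsH1 (T : ℝ) (x x' : ℝ → ℂ) : Prop :=
  Continuous x ∧ IntervalIntegrable x' volume 0 T ∧
  IntervalIntegrable (fun t => ‖x' t‖ ^ 2) volume 0 T ∧
  ∀ t ∈ Set.Icc (0 : ℝ) T, x t = x 0 + ∫ s in (0 : ℝ)..t, x' s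

/-- A real-valued `H¹` function `θ` with weak derivative `θ'` on `[0,T]`. -/
def IsH1Real (T : ℝ) (θ θ' : ℝ → ℝ) : Prop :=
  Continuous θ ∧ IntervalIntegrable θ' volume 0 T ∧
  ∀ t ∈ Set.Icc (0 : ℝ) T, θ t = θ 0 + ∫ s in (0 : ℝ)..t, θ' s

/-- For an `H¹` loop `x : [0,T] → ℝ² \ {0}` with nonzero winding number
around the origin, written in polar coordinates `x = ρ e^{iθ}`, one has
`∫₀ᵀ |ẋ|² ≥ (1/T)(x_M − x_m)² + (x_m²/T)(∫₀ᵀ |θ̇|)²`, where `x_M`, `x_m` are the maximum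
and minimum of `|x|` on `[0,T]`. -/
theorem kinetic_lower_bound (T : ℝ) (hT : 0 < T) (x x' : ℝ → ℂ) (θ θ' : ℝ → ℝ)
    (xM xm : ℝ)
    (hH1 : IsH1 T x x') (hloop : x 0 = x T)
    (hne : ∀ t ∈ Set.Icc (0 : ℝ) T, x t ≠ 0)
    (hθ : IsH1Real T θ θ')
    (hθint : IntervalIntegrable (fun t => |θ' t|) volume 0 T)
    (hpolar : ∀ t ∈ Set.Icc (0 : ℝ) T,
      x t = (‖x t‖ : ℂ) * Complex.exp ((θ t : ℂ) * Complex.I))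
    (hwind : ∃ k : ℤ, k ≠ 0 ∧ θ T - θ 0 = 2 * Real.pi * (k : ℝ))
    (hM : IsGreatest ((fun t => ‖x t‖) '' Set.Icc (0 : ℝ) T) xM)
    (hm : IsLeast ((fun t => ‖x t‖) '' Set.Icc (0 : ℝ) T) xm) :
    (1 / T) * (xM - xm) ^ 2 + (xm ^ 2 / T) * (∫ t in (0 : ℝ)..T, |θ' t|) ^ 2
      ≤ ∫ t in (0 : ℝ)..T, ‖x' t‖ ^ 2 := by
  obtain ⟨hxc, hx'i, hx'2i, hxr⟩ := hH1
  obtain ⟨hθc, hθ'i, hθr⟩ := hθ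
  have hT0 : (0:ℝ) ≤ T := hT.le
  have h0Icc : (0:ℝ) ∈ Icc (0:ℝ) T := ⟨le_rfl, hT0⟩
  set ρ : ℝ → ℝ := fun s => ‖x s‖ with hρdef
  -- the negative angle and the unit conjugate phase
  set ψ : ℝ → ℝ := fun s => -θ s with hψdef
  set ψ' : ℝ → ℝ := fun s => -θ' s with hψ'def
  have hψc : Continuous ψ := hθc.neg
  have hψ'i : IntervalIntegrable ψ' volume 0 T := hθ'i.neg
  have hψr : ∀ t ∈ Icc (0:ℝ) T, ψ t = ψ 0 + ∫ s in (0:ℝ)..t, ψ' s := by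
    intro t ht
    rw [hψdef, hψ'def]
    simp only [intervalIntegral.integral_neg]
    rw [hθr t ht]
    ring
  set v : ℝ → ℂ := fun s => Complex.exp ((ψ s : ℂ) * Complex.I) with hvdef
  set v' : ℝ → ℂ := fun s => (ψ' s : ℂ) * Complex.I * v s with hv'def
  have hvcont : Continuous v :=
    Complex.continuous_exp.comp ((Complex.continuous_ofReal.comp hψc).mul continuous_const)
  have hv_rep : ∀ t ∈ Icc (0:ℝ) T, v t = v 0 + ∫ s in (0:ℝ)..t, v' s :=
    exp_rep hT0 hψc hψ'i hψr
  have hv'i : IntervalIntegrable v' volume 0 T := by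
    have h1 := (intervalIntegrable_ofReal hψ'i).mul_continuousOn
      ((continuous_const.mul hvcont : Continuous fun s => Complex.I * v s)).continuousOn
    simpa [hv'def, mul_assoc] using h1
  have hvnorm : ∀ s, ‖v s‖ = 1 := by
    intro s
    rw [hvdef]
    exact Complex.norm_exp_ofReal_mul_I (ψ s)
  -- xv = ρ on Icc
  have hxv : ∀ s ∈ Icc (0:ℝ) T, x s * v s = ((ρ s : ℝ) : ℂ) := by
    intro s hs
    rw [hpolar s hs, hvdef, hψdef]
    push_cast
    rw [mul_assoc, ← Complex.exp_add]
    norm_num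
    simp [hρdef]
  -- product rule for x v
  have hprod := primitive_mul hxc hvcont hx'i hv'i hxr hv_rep
  set r' : ℝ → ℝ := fun s => (x' s * v s).re with hr'def
  have hxvi : IntervalIntegrable (fun s => x' s * v s) volume 0 T :=
    hx'i.mul_continuousOn hvcont.continuousOn
  have hxv'i : IntervalIntegrable (fun s => x s * v' s) volume 0 T :=
    hv'i.continuousOn_mul hxc.continuousOn
  have hwi : IntervalIntegrable (fun s => x s * v' s + x' s * v s) volume 0 T :=
    hxv'i.add hxvi
  have hr'i : IntervalIntegrable r' volume 0 T := by
    rw [intervalIntegrable_iff] at hxvi ⊢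
    exact hxvi.re
  -- representation of ρ
  have hρrep : ∀ t ∈ Icc (0:ℝ) T, ρ t = ρ 0 + ∫ s in (0:ℝ)..t, r' s := by
    intro t ht
    have h1 := hprod t ht
    rw [hxv t ht, hxv 0 h0Icc] at h1
    have h2 : (((ρ t : ℝ):ℂ)).re = (((ρ 0 : ℝ):ℂ) + ∫ s in (0:ℝ)..t, (x s * v' s + x' s * v s)).re := by
      rw [← h1]
    simp only [Complex.ofReal_re, Complex.add_re] at h2
    rw [h2]
    congr 1
    have hwt : IntervalIntegrable (fun s => x s * v' s + x' s * v s) volume 0 t := by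
      apply hwi.mono_set
      rw [uIcc_of_le ht.1, uIcc_of_le hT0]
      exact Icc_subset_Icc le_rfl ht.2
    have h3 := Complex.reCLM.intervalIntegral_comp_comm hwt
    simp only [Complex.reCLM_apply] at h3
    rw [← h3]
    rw [integral_of_le ht.1, integral_of_le ht.1]
    apply setIntegral_congr_fun measurableSet_Ioc
    intro s hs
    have hsIcc : s ∈ Icc (0:ℝ) T := ⟨hs.1.le, hs.2.trans ht.2⟩
    simp only [Complex.reCLM_apply, Complex.add_re]
    have h4 : x s * v' s = (ψ' s : ℂ) * Complex.I * ((ρ s : ℝ) : ℂ) := by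
      rw [hv'def, ← hxv s hsIcc]
      ring
    rw [hr'def, h4]
    simp [Complex.mul_re]
  -- a.e. identity
  have hx_ae := ae_hasDerivWithinAt_of_rep hT0 hx'i hxr
  have hθ_ae := ae_hasDerivWithinAt_of_rep (E := ℝ) hT0 hθ'i hθr
  have hae_id : ∀ᵐ s : ℝ, s ∈ Ioo (0:ℝ) T →
      r' s ^ 2 + (ρ s * θ' s) ^ 2 = ‖x' s‖ ^ 2 := by
    filter_upwards [hx_ae, hθ_ae] with s hxd hθd hs
    have hsIcc : s ∈ Icc (0:ℝ) T := Ioo_subset_Icc_self hs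
    have hxds := hxd hs
    have hθds := hθd hs
    -- derivative of v within Icc
    have h1 : HasDerivWithinAt ψ (ψ' s) (Icc 0 T) s := by
      rw [hψdef, hψ'def]; exact hθds.neg
    have h2 : HasDerivWithinAt (fun u => ((ψ u : ℝ) : ℂ)) ((ψ' s : ℂ)) (Icc 0 T) s :=
      Complex.ofRealCLM.hasFDerivAt.comp_hasDerivWithinAt s h1
    have h3 : HasDerivWithinAt (fun u => ((ψ u : ℝ) : ℂ) * Complex.I)
        ((ψ' s : ℂ) * Complex.I) (Icc 0 T) s := h2.mul_const _
    have hvd : HasDerivWithinAt v (v' s) (Icc 0 T) s := by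
      have h4 := h3.cexp
      rw [hvdef, hv'def]
      convert h4 using 1
      ring
    have hφd : HasDerivWithinAt (fun u => x u * v u) (x' s * v s + x s * v' s)
        (Icc 0 T) s := hxds.mul hvd
    have hψd : HasDerivWithinAt (fun u => (x u * v u).im)
        ((x' s * v s + x s * v' s).im) (Icc 0 T) s :=
      Complex.imCLM.hasFDerivAt.comp_hasDerivWithinAt s hφd
    have hzero : ∀ u ∈ Icc (0:ℝ) T, (x u * v u).im = (0:ℝ) := by
      intro u hu
      rw [hxv u hu]
      simp
    have hψ0 : HasDerivWithinAt (fun u => (x u * v u).im) 0 (Icc 0 T) s := by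
      apply (hasDerivWithinAt_const s (Icc (0:ℝ) T) (0:ℝ)).congr hzero (hzero s hsIcc)
    have huniq : UniqueDiffWithinAt ℝ (Icc (0:ℝ) T) s := (uniqueDiffOn_Icc hT) s hsIcc
    have heq : (x' s * v s + x s * v' s).im = 0 := huniq.eq_deriv _ hψd hψ0
    have h5 : x s * v' s = (ψ' s : ℂ) * Complex.I * ((ρ s : ℝ) : ℂ) := by
      rw [hv'def, ← hxv s hsIcc]; ring
    rw [Complex.add_im, h5] at heq
    have him : (x' s * v s).im = θ' s * ρ s := by
      have h6 : ((ψ' s : ℂ) * Complex.I * ((ρ s : ℝ) : ℂ)).im = -θ' s * ρ s := by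
        rw [hψ'def]
        simp [Complex.mul_im]
      rw [h6] at heq
      linarith
    have hnorm2 : ‖x' s‖ ^ 2 = (x' s * v s).re ^2 + (x' s * v s).im ^ 2 := by
      have h7 : ‖x' s * v s‖ = ‖x' s‖ := by rw [norm_mul, hvnorm s, mul_one]
      have h8 := Complex.sq_norm (x' s * v s)
      rw [Complex.normSq_apply] at h8
      rw [← h7, h8]
      ring
    rw [hnorm2, hr'def, him]
    ring

  -- extremal points and positivity
  obtain ⟨ta, hta, hρa⟩ := hm.1
  obtain ⟨tb, htb, hρb⟩ := hM.1
  have hxm_pos : 0 < xm := by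
    rw [← hρa]; exact norm_pos_iff.mpr (hne ta hta)
  have hxm_le : ∀ s ∈ Icc (0:ℝ) T, xm ≤ ρ s := fun s hs => hm.2 ⟨s, hs, rfl⟩
  have hxMm : xm ≤ xM := hm.2 hM.1
  -- pointwise bound |r'| ≤ ‖x'‖
  have hr'_le : ∀ s, |r' s| ≤ ‖x' s‖ := by
    intro s
    rw [hr'def]
    calc |(x' s * v s).re| ≤ ‖x' s * v s‖ := Complex.abs_re_le_norm _
      _ = ‖x' s‖ := by rw [norm_mul, hvnorm s, mul_one]
  -- integrability of squares
  have hr'2i : IntervalIntegrable (fun s => r' s ^ 2) volume 0 T := by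
    apply hx'2i.mono_fun
    · have hsm := hr'i.1.aestronglyMeasurable
      rw [uIoc_of_le hT0]
      exact (hsm.mul hsm).congr (Eventually.of_forall fun s => by simp [pow_two])
    · apply Filter.Eventually.of_forall
      intro s
      simp only [Real.norm_eq_abs]
      rw [abs_of_nonneg (sq_nonneg _), abs_of_nonneg (sq_nonneg _)]
      calc r' s ^ 2 = |r' s| ^ 2 := (sq_abs _).symm
        _ ≤ ‖x' s‖ ^ 2 := by
            apply pow_le_pow_left₀ (abs_nonneg _) (hr'_le s)
  -- a.e. statements on the restricted measure
  have hptnull : ∀ c : ℝ, ∀ᵐ s : ℝ, s ≠ c := by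
    intro c
    rw [ae_iff]
    have : {s : ℝ | ¬ s ≠ c} = {c} := by ext s; simp
    rw [this]; exact Real.volume_singleton
  have hres : ∀ᵐ s ∂(volume.restrict (Ioc (0:ℝ) T)),
      r' s ^ 2 + (ρ s * θ' s) ^ 2 = ‖x' s‖ ^ 2 ∧ xm ≤ ρ s := by
    filter_upwards [ae_restrict_of_ae hae_id, ae_restrict_of_ae (hptnull T),
      ae_restrict_mem measurableSet_Ioc] with s h1 h2 h3
    have hIoo : s ∈ Ioo (0:ℝ) T := ⟨h3.1, lt_of_le_of_ne h3.2 h2⟩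
    exact ⟨h1 hIoo, hxm_le s (Ioo_subset_Icc_self hIoo)⟩
  have hθ'2i : IntervalIntegrable (fun s => θ' s ^ 2) volume 0 T := by
    apply (hx'2i.const_mul (xm⁻¹ ^ 2)).mono_fun
    · have hsm := hθ'i.1.aestronglyMeasurable
      rw [uIoc_of_le hT0]
      exact (hsm.mul hsm).congr (Eventually.of_forall fun s => by simp [pow_two])
    · rw [uIoc_of_le hT0]
      filter_upwards [hres] with s hsp
      obtain ⟨hid, hxmle⟩ := hsp
      simp only [Real.norm_eq_abs]
      rw [abs_of_nonneg (sq_nonneg _)]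
      have hb1 : θ' s ^ 2 * xm ^ 2 ≤ ‖x' s‖ ^ 2 := by
        nlinarith [sq_nonneg (r' s), sq_nonneg (θ' s), hxm_pos.le,
          mul_self_le_mul_self hxm_pos.le hxmle, sq_nonneg (θ' s * xm)]
      have hb2 : xm⁻¹ ^ 2 * (θ' s ^ 2 * xm ^ 2) = θ' s ^ 2 := by
        field_simp
      have hb3 := mul_le_mul_of_nonneg_left hb1 (sq_nonneg xm⁻¹)
      rw [hb2] at hb3
      calc θ' s ^ 2 ≤ xm⁻¹ ^ 2 * ‖x' s‖ ^ 2 := hb3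
        _ ≤ |xm⁻¹ ^ 2 * ‖x' s‖ ^ 2| := le_abs_self _
  -- the main integral comparison
  have hIcc_ae : (fun s => r' s ^ 2 + xm ^ 2 * θ' s ^ 2)
      ≤ᵐ[volume.restrict (Icc (0:ℝ) T)] fun s => ‖x' s‖ ^ 2 := by
    filter_upwards [ae_restrict_of_ae hae_id, ae_restrict_of_ae (hptnull T),
      ae_restrict_of_ae (hptnull 0), ae_restrict_mem measurableSet_Icc] with s h1 h2 h0 h3
    have hIoo : s ∈ Ioo (0:ℝ) T :=
      ⟨lt_of_le_of_ne h3.1 (Ne.symm h0), lt_of_le_of_ne h3.2 h2⟩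
    have hid := h1 hIoo
    have hxmle := hxm_le s (Ioo_subset_Icc_self hIoo)
    nlinarith [sq_nonneg (θ' s), sq_nonneg (r' s), hxm_pos.le,
      mul_self_le_mul_self hxm_pos.le hxmle]
  have hsplit_le : (∫ s in (0:ℝ)..T, (r' s ^ 2 + xm ^ 2 * θ' s ^ 2))
      ≤ ∫ s in (0:ℝ)..T, ‖x' s‖ ^ 2 :=
    integral_mono_ae_restrict hT0 (hr'2i.add ((hθ'2i.const_mul (xm ^ 2)))) hx'2i hIcc_ae
  have hsum_eq : ∫ s in (0:ℝ)..T, (r' s ^ 2 + xm ^ 2 * θ' s ^ 2)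
      = (∫ s in (0:ℝ)..T, r' s ^ 2) + xm ^ 2 * ∫ s in (0:ℝ)..T, θ' s ^ 2 := by
    rw [intervalIntegral.integral_add hr'2i (hθ'2i.const_mul _),
      intervalIntegral.integral_const_mul]
  -- Cauchy–Schwarz
  have hcsr := cs_helper hT hr'i hr'2i
  have hcsθ := cs_helper hT hθ'i hθ'2i
  -- lower bound for the radial variation
  have hnonneg : (0 : ℝ → ℝ) ≤ᵐ[volume.restrict (Ioc (0:ℝ) T)] fun s => |r' s| :=
    Filter.Eventually.of_forall fun s => abs_nonneg _
  have hsub_ab : ∀ u ∈ Icc (0:ℝ) T, IntervalIntegrable r' volume 0 u := fun u hu =>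
    hr'i.mono_set (by rw [uIcc_of_le hu.1, uIcc_of_le hT0]; exact Icc_subset_Icc le_rfl hu.2)
  have hB : xM - xm ≤ ∫ s in (0:ℝ)..T, |r' s| := by
    have hdiff : xM - xm = ∫ s in ta..tb, r' s := by
      rw [← hρb, ← hρa, hρrep tb htb, hρrep ta hta]
      rw [show (ρ 0 + ∫ s in (0:ℝ)..tb, r' s) - (ρ 0 + ∫ s in (0:ℝ)..ta, r' s)
        = (∫ s in (0:ℝ)..tb, r' s) - (∫ s in (0:ℝ)..ta, r' s) by ring]
      exact integral_interval_sub_left (hsub_ab tb htb) (hsub_ab ta hta)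
    rcases le_total ta tb with h | h
    · rw [hdiff]
      have hint_ab : IntervalIntegrable r' volume ta tb := by
        apply hr'i.mono_set
        rw [uIcc_of_le h, uIcc_of_le hT0]
        exact Icc_subset_Icc hta.1 htb.2
      calc ∫ s in ta..tb, r' s ≤ ∫ s in ta..tb, |r' s| :=
            integral_mono_on h hint_ab hint_ab.abs fun s _ => le_abs_self _
        _ ≤ ∫ s in (0:ℝ)..T, |r' s| :=
            integral_mono_interval hta.1 h htb.2 hnonneg hr'i.abs
    · rw [hdiff, integral_symm]
      have habs2 : |∫ s in tb..ta, r' s| ≤ ∫ s in tb..ta, |r' s| :=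
        intervalIntegral.abs_integral_le_integral_abs h
      calc -(∫ s in tb..ta, r' s) ≤ |∫ s in tb..ta, r' s| := neg_le_abs _
        _ ≤ ∫ s in tb..ta, |r' s| := habs2
        _ ≤ ∫ s in (0:ℝ)..T, |r' s| :=
            integral_mono_interval htb.1 h hta.2 hnonneg hr'i.abs
  -- final assembly
  have h1 : (xM - xm) ^ 2 ≤ T * ∫ s in (0:ℝ)..T, r' s ^ 2 := by
    calc (xM - xm) ^ 2 ≤ (∫ s in (0:ℝ)..T, |r' s|) ^ 2 :=
          pow_le_pow_left₀ (by linarith) hB 2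
      _ ≤ T * ∫ s in (0:ℝ)..T, r' s ^ 2 := hcsr
  have k1 : (1 / T) * (xM - xm) ^ 2 ≤ ∫ s in (0:ℝ)..T, r' s ^ 2 := by
    rw [one_div, inv_mul_eq_div, div_le_iff₀ hT]
    linarith [h1]
  have k2 : (xm ^ 2 / T) * (∫ t in (0:ℝ)..T, |θ' t|) ^ 2
      ≤ xm ^ 2 * ∫ s in (0:ℝ)..T, θ' s ^ 2 := by
    rw [div_mul_eq_mul_div, div_le_iff₀ hT]
    nlinarith [mul_le_mul_of_nonneg_left hcsθ (sq_nonneg xm)]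
  linarith [hsplit_le, hsum_eq.symm.trans_le hsplit_le, k1, k2,
    hsum_eq ▸ hsplit_le]
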